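/- Fix c ∈ (0, c₁] and a compact set K ⊆ ℝ² and a compact parameter set A ⊆ ℝ, and let M be an upper bound for ‖Z₋(z,α) − Z₊(z,α)‖ on K × A. Then for all z ∈ K, α ∈ A, all y ∈ [c, c₁] and all ε ∈ (0, c₀·c], one has ‖Z(z, φ(y·ε⁻¹, ε), α) − Z₊(z, α)‖ ≤ c₃ · M · (ε/c)^k. In particular, on the region {y ≥ c} the regularized vector field Z(z, φ(y ε⁻¹, ε), α) is a perturbation of Z₊(z,α) of order O(ε^k), uniformly as ε → 0. -/
import Mathlib


open Set

/-- Under (A0) and (A2), on the region `y ≥ c` the regularized vector field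
`Z(z, φ(y/ε, ε), α) = φ·Zp + (1-φ)·Zm` is an `O(ε^k)` perturbation of `Zp`,
uniformly: its distance to `Zp` is at most `c₃ * M * (ε/c)^k`. -/
theorem regularized_perturbation_of_Zplus
    (Zp Zm : ℝ × ℝ → ℝ → ℝ × ℝ)
    (φ : ℝ → ℝ → ℝ) (φp : ℝ → ℝ → ℝ)
    (k : ℕ) (hk : 1 ≤ k)
    (c₀ c₁ c₂ c₃ : ℝ) (hc₀ : 0 < c₀) (hc₁ : 0 < c₁) (hc₂ : 0 < c₂) (hc₂₃ : c₂ ≤ c₃)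
    (hφpmem : ∀ ε₁ ∈ Icc (0:ℝ) c₀, ∀ r₁ ∈ Icc (0:ℝ) c₁, φp ε₁ r₁ ∈ Icc c₂ c₃)
    (hA2 : ∀ ε₁ ∈ Icc (0:ℝ) c₀, ∀ r₁ ∈ Icc (0:ℝ) c₁, ε₁ ≠ 0 →
      φ ε₁⁻¹ (r₁ * ε₁) = 1 - ε₁ ^ k * φp ε₁ r₁)
    (c : ℝ) (hc : c ∈ Ioc (0:ℝ) c₁)
    (K : Set (ℝ × ℝ)) (hK : IsCompact K)
    (A : Set ℝ) (hA : IsCompact A)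
    (M : ℝ) (hM : ∀ z ∈ K, ∀ α ∈ A, ‖Zm z α - Zp z α‖ ≤ M) :
    ∀ z ∈ K, ∀ α ∈ A, ∀ y ∈ Icc c c₁, ∀ ε ∈ Ioc (0:ℝ) (c₀ * c),
      ‖(φ (y * ε⁻¹) ε • Zp z α + (1 - φ (y * ε⁻¹) ε) • Zm z α) - Zp z α‖
        ≤ c₃ * M * (ε / c) ^ k := by
  rintro z hz α hα y ⟨hyc, hyc₁⟩ ε ⟨hε, hεc⟩
  obtain ⟨hc0, hcc₁⟩ := hc
  have hy : 0 < y := lt_of_lt_of_le hc0 hyc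
  set ε₁ : ℝ := ε / y with hε₁def
  have hε₁pos : 0 < ε₁ := div_pos hε hy
  have hε₁mem : ε₁ ∈ Icc (0:ℝ) c₀ := by
    constructor
    · exact hε₁pos.le
    · rw [div_le_iff₀ hy]
      calc ε ≤ c₀ * c := hεc
        _ ≤ c₀ * y := by nlinarith
  have hymem : y ∈ Icc (0:ℝ) c₁ := ⟨hy.le, hyc₁⟩
  have key := hA2 ε₁ hε₁mem y hymem hε₁pos.ne'
  have h1 : ε₁⁻¹ = y * ε⁻¹ := by
    rw [hε₁def]; field_simp
  have h2 : y * ε₁ = ε := by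
    rw [hε₁def]; field_simp
  rw [h1, h2] at key
  rw [key]
  have hexpr : (1 - ε₁ ^ k * φp ε₁ y) • Zp z α + (1 - (1 - ε₁ ^ k * φp ε₁ y)) • Zm z α - Zp z α
      = (ε₁ ^ k * φp ε₁ y) • (Zm z α - Zp z α) := by
    simp only [sub_sub_cancel, smul_sub, sub_smul, one_smul]
    abel
  rw [hexpr, norm_smul]
  have hφp := hφpmem ε₁ hε₁mem y hymem
  have hφppos : 0 < φp ε₁ y := lt_of_lt_of_le hc₂ hφp.1
  have hnn : 0 ≤ ε₁ ^ k * φp ε₁ y := by positivity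
  rw [Real.norm_of_nonneg hnn]
  have hMnn : 0 ≤ M := le_trans (norm_nonneg _) (hM z hz α hα)
  have hε₁le : ε₁ ≤ ε / c := by
    apply div_le_div_of_nonneg_left hε.le hc0 hyc
  have hpow : ε₁ ^ k ≤ (ε / c) ^ k := pow_le_pow_left₀ hε₁pos.le hε₁le k
  calc ε₁ ^ k * φp ε₁ y * ‖Zm z α - Zp z α‖
      ≤ (ε / c) ^ k * c₃ * M := by
        apply mul_le_mul _ (hM z hz α hα) (norm_nonneg _)
          (mul_nonneg (by positivity) (hc₂.trans_le hc₂₃).le)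
        exact mul_le_mul hpow hφp.2 hφppos.le (by positivity)
    _ = c₃ * M * (ε / c) ^ k := by ring
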